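/- Fix a prime p and integer k ≥ 4. The 3×3 matrix of the linear system a = a₀+a₁+a₂, b = a₀ + (p^{k−1}+1−p^{−1})a₁ + (p^{2k−3}+p^{k−1}−p^{k−3}+1−p^{−1})a₂, and the U₁(p²)-relation (with coefficients (p+1), (p^{2k−2}+p^{k−1}−p^{k−2}+p+1−p^{−1}), (p^{2k−2}+p^{2k−3}+p^{k−1}−p^{k−3}+p+1−p^{−1}−p^{−2}) respectively), is invertible over ℚ; in particular (a₀,a₁,a₂) is uniquely determined by the left-hand sides. -/

import Mathlib

lemma stmt_12_aux (q : ℚ) (hq2 : 2 ≤ q) (j : ℕ) :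
    (q ^ (j + 3) + 1 - q⁻¹) *
        (q ^ (2 * j + 6) + q ^ (2 * j + 5) + q ^ (j + 3) - q ^ (j + 1) + q + 1 - q⁻¹ -
          (q ^ 2)⁻¹) -
      (q ^ (2 * j + 5) + q ^ (j + 3) - q ^ (j + 1) + 1 - q⁻¹) *
        (q ^ (2 * j + 6) + q ^ (j + 3) - q ^ (j + 2) + q + 1 - q⁻¹) -
      (q ^ (2 * j + 6) + q ^ (2 * j + 5) + q ^ (j + 3) - q ^ (j + 1) + q + 1 - q⁻¹ -
        (q ^ 2)⁻¹) +
      (q ^ (2 * j + 5) + q ^ (j + 3) - q ^ (j + 1) + 1 - q⁻¹) * (q + 1) +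
      (q ^ (2 * j + 6) + q ^ (j + 3) - q ^ (j + 2) + q + 1 - q⁻¹) -
      (q ^ (j + 3) + 1 - q⁻¹) * (q + 1) ≠ 0 := by
  have hq0 : q ≠ 0 := by positivity
  have hq1 : (1 : ℚ) < q := by linarith
  have key : (q ^ (j + 3) + 1 - q⁻¹) *
        (q ^ (2 * j + 6) + q ^ (2 * j + 5) + q ^ (j + 3) - q ^ (j + 1) + q + 1 - q⁻¹ -
          (q ^ 2)⁻¹) -
      (q ^ (2 * j + 5) + q ^ (j + 3) - q ^ (j + 1) + 1 - q⁻¹) *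
        (q ^ (2 * j + 6) + q ^ (j + 3) - q ^ (j + 2) + q + 1 - q⁻¹) -
      (q ^ (2 * j + 6) + q ^ (2 * j + 5) + q ^ (j + 3) - q ^ (j + 1) + q + 1 - q⁻¹ -
        (q ^ 2)⁻¹) +
      (q ^ (2 * j + 5) + q ^ (j + 3) - q ^ (j + 1) + 1 - q⁻¹) * (q + 1) +
      (q ^ (2 * j + 6) + q ^ (j + 3) - q ^ (j + 2) + q + 1 - q⁻¹) -
      (q ^ (j + 3) + 1 - q⁻¹) * (q + 1) =
      -((q ^ (j + 3) - 1) * (q ^ (j + 3) + 1) * (q ^ (j + 4) - 1) ^ 2) / q ^ 3 := by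
    field_simp
    ring
  rw [key]
  have h3 : (1 : ℚ) < q ^ (j + 3) := one_lt_pow₀ hq1 (by omega)
  have h4 : (1 : ℚ) < q ^ (j + 4) := one_lt_pow₀ hq1 (by omega)
  have hpos : (0 : ℚ) < (q ^ (j + 3) - 1) * (q ^ (j + 3) + 1) * (q ^ (j + 4) - 1) ^ 2 := by
    have h4' : (0 : ℚ) < q ^ (j + 4) - 1 := by linarith
    have h3' : (0 : ℚ) < q ^ (j + 3) - 1 := by linarith
    positivity
  have hq3 : (0 : ℚ) < q ^ 3 := by positivity
  intro h
  rw [div_eq_zero_iff] at h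
  rcases h with h | h
  · linarith
  · linarith

/-- The 3×3 matrix of the linear system relating (a(T), a(pT), a(T;E|U₁(p²))) to
(a₀, a₁, a₂) is invertible over ℚ. -/
theorem stmt_12 (p k : ℕ) (hp : p.Prime) (hk : 4 ≤ k) :
    IsUnit (!![(1 : ℚ), 1, 1;
      1, (p : ℚ) ^ (k - 1) + 1 - (p : ℚ)⁻¹,
        (p : ℚ) ^ (2 * k - 3) + (p : ℚ) ^ (k - 1) - (p : ℚ) ^ (k - 3) + 1 - (p : ℚ)⁻¹;
      (p : ℚ) + 1,
        (p : ℚ) ^ (2 * k - 2) + (p : ℚ) ^ (k - 1) - (p : ℚ) ^ (k - 2) + (p : ℚ) + 1 -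
          (p : ℚ)⁻¹,
        (p : ℚ) ^ (2 * k - 2) + (p : ℚ) ^ (2 * k - 3) + (p : ℚ) ^ (k - 1) -
          (p : ℚ) ^ (k - 3) + (p : ℚ) + 1 - (p : ℚ)⁻¹ - ((p : ℚ) ^ 2)⁻¹] :
      Matrix (Fin 3) (Fin 3) ℚ) := by
  obtain ⟨j, rfl⟩ : ∃ j, k = j + 4 := ⟨k - 4, by omega⟩
  rw [Matrix.isUnit_iff_isUnit_det, Matrix.det_fin_three, isUnit_iff_ne_zero]
  norm_num [Matrix.cons_val_zero]
  have e2 : j + 4 - 2 = j + 2 := by omega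
  have e3 : j + 4 - 3 = j + 1 := by omega
  have e4 : 2 * (j + 4) - 3 = 2 * j + 5 := by omega
  have e5 : 2 * (j + 4) - 2 = 2 * j + 6 := by omega
  rw [e2, e3, e4, e5]
  have hq2 : (2 : ℚ) ≤ (p : ℚ) := by exact_mod_cast hp.two_le
  simp only [Matrix.cons_val_one, Matrix.cons_val_two, Matrix.head_cons, Matrix.tail_cons,
    Matrix.cons_val_zero, Matrix.vecHead, one_mul]
  exact stmt_12_aux (p : ℚ) hq2 j
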